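/- Let J be a positive half-integer and L ≥ 2. For each integer-spaced value M with -J(2L+1) ≤ M ≤ J(2L+1) and M ≡ J(2L+1) mod 1 (i.e., M is an allowed total magnetization), there is exactly one ground state configuration m (i.e., with E(m)=0) satisfying Σ_α m_α = M. -/

import Mathlib

/-- `J` is a positive half-integer: `J ∈ (1/2)ℕ`, `J > 0`. -/
def IsHalfInt (J : ℝ) : Prop := ∃ k : ℕ, 0 < k ∧ J = k / 2

/-- `m` is an allowed spin value for spin `J`: `m ∈ {-J, -J+1, …, J}`. -/
def IsSpinVal (J m : ℝ) : Prop := |m| ≤ J ∧ ∃ k : ℤ, m = -J + k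

/-- Telescoping sum over an integer interval. -/
lemma tele_sum (f : ℤ → ℤ) (a : ℤ) : ∀ b : ℤ, a - 1 ≤ b →
    ∑ α ∈ Finset.Icc a b, (f α - f (α + 1)) = f a - f (b + 1) := by
  refine Int.le_induction ?_ ?_
  · rw [Finset.Icc_eq_empty (by omega)]
    simp [show a - 1 + 1 = a by ring]
  · intro b hb ih
    have hins : Finset.Icc a (b + 1) = insert (b + 1) (Finset.Icc a b) := by
      ext x; simp only [Finset.mem_Icc, Finset.mem_insert]; omega
    rw [hins, Finset.sum_insert (by simp), ih]
    ring

/-- From zero energy: each bond term forces `m α = -J` or `m (α+1) = J`. -/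
lemma bonds {J : ℝ} (hJ0 : 0 < J) {L : ℤ} {m : ℤ → ℝ}
    (hs : ∀ α ∈ Finset.Icc (-L) L, IsSpinVal J (m α))
    (hE : (∑ α ∈ Finset.Icc (-L) (L - 1), (J + m α) * (J - m (α + 1))) = 0) :
    ∀ α ∈ Finset.Icc (-L) (L - 1), m α = -J ∨ m (α + 1) = J := by
  have hnn : ∀ α ∈ Finset.Icc (-L) (L - 1), 0 ≤ (J + m α) * (J - m (α + 1)) := by
    intro α hα
    rw [Finset.mem_Icc] at hα
    have h1 := (hs α (by rw [Finset.mem_Icc]; omega)).1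
    have h2 := (hs (α + 1) (by rw [Finset.mem_Icc]; omega)).1
    rw [abs_le] at h1 h2
    nlinarith [h1.1, h1.2, h2.1, h2.2]
  have hz := (Finset.sum_eq_zero_iff_of_nonneg hnn).mp hE
  intro α hα
  have := hz α hα
  rcases mul_eq_zero.mp this with h | h
  · left; linarith
  · right; linarith

/-- Propagation of `J` to the right in a ground state. -/
lemma prop_right {J : ℝ} (hJ0 : 0 < J) {L : ℤ} {m : ℤ → ℝ}
    (hb : ∀ α ∈ Finset.Icc (-L) (L - 1), m α = -J ∨ m (α + 1) = J)
    {α : ℤ} (hα : -L ≤ α) (hne : m α ≠ -J) :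
    ∀ β : ℤ, α + 1 ≤ β → β ≤ L → m β = J := by
  refine Int.le_induction ?_ ?_
  · intro hβL
    rcases hb α (by rw [Finset.mem_Icc]; omega) with h | h
    · exact absurd h hne
    · exact h
  · intro β hβ ih hβL
    have hmb : m β = J := ih (by omega)
    rcases hb β (by rw [Finset.mem_Icc]; omega) with h | h
    · exfalso; rw [hmb] at h; linarith
    · exact h

/-- If two ground states differ at one site, their sums differ strictly. -/
lemma sum_lt {J : ℝ} (hJ0 : 0 < J) {L : ℤ} (hL : 2 ≤ L) {m m' : ℤ → ℝ}
    (hs : ∀ α ∈ Finset.Icc (-L) L, IsSpinVal J (m α))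
    (hE : (∑ α ∈ Finset.Icc (-L) (L - 1), (J + m α) * (J - m (α + 1))) = 0)
    (hs' : ∀ α ∈ Finset.Icc (-L) L, IsSpinVal J (m' α))
    (hE' : (∑ α ∈ Finset.Icc (-L) (L - 1), (J + m' α) * (J - m' (α + 1))) = 0)
    {α₀ : ℤ} (hα₀ : α₀ ∈ Finset.Icc (-L) L) (hlt : m α₀ < m' α₀) :
    (∑ α ∈ Finset.Icc (-L) L, m α) < ∑ α ∈ Finset.Icc (-L) L, m' α := by
  have hb := bonds hJ0 hs hE
  have hb' := bonds hJ0 hs' hE'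
  rw [Finset.mem_Icc] at hα₀
  have habs : ∀ β ∈ Finset.Icc (-L) L, -J ≤ m β ∧ m β ≤ J := by
    intro β hβ; exact abs_le.mp (hs β hβ).1
  have habs' : ∀ β ∈ Finset.Icc (-L) L, -J ≤ m' β ∧ m' β ≤ J := by
    intro β hβ; exact abs_le.mp (hs' β hβ).1
  have hle : ∀ β ∈ Finset.Icc (-L) L, m β ≤ m' β := by
    intro β hβ
    have hβ' := hβ
    rw [Finset.mem_Icc] at hβ'
    rcases lt_trichotomy β α₀ with h | h | h
    · -- β < α₀ : show m β = -J
      have : m β = -J := by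
        by_contra hne
        have : m α₀ = J := prop_right hJ0 hb hβ'.1 hne α₀ (by omega) (by omega)
        have := (habs' α₀ (by rw [Finset.mem_Icc]; omega)).2
        linarith
      rw [this]; exact (habs' β hβ).1
    · rw [h]; exact le_of_lt hlt
    · -- β > α₀ : show m' β = J
      have hne' : m' α₀ ≠ -J := by
        have := (habs α₀ (by rw [Finset.mem_Icc]; omega)).1
        intro h'; rw [h'] at hlt; linarith
      have : m' β = J := prop_right hJ0 hb' hα₀.1 hne' β (by omega) hβ'.2
      rw [this]; exact (habs β hβ).2
  exact Finset.sum_lt_sum hle ⟨α₀, by rw [Finset.mem_Icc]; omega, hlt⟩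

/-- In each allowed magnetization sector `M` there is exactly one
ground state configuration (i.e. one with `E(m) = 0` and `Σ_α m_α = M`). -/
theorem stmt4 (J : ℝ) (hJ : IsHalfInt J) (L : ℤ) (hL : 2 ≤ L) (M : ℝ)
    (hM : ∃ c : ℤ → ℝ, (∀ α ∈ Finset.Icc (-L) L, IsSpinVal J (c α)) ∧
      (∑ α ∈ Finset.Icc (-L) L, c α) = M) :
    (∃ m : ℤ → ℝ, (∀ α ∈ Finset.Icc (-L) L, IsSpinVal J (m α)) ∧
        (∑ α ∈ Finset.Icc (-L) L, m α) = M ∧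
        (∑ α ∈ Finset.Icc (-L) (L - 1), (J + m α) * (J - m (α + 1))) = 0) ∧
    (∀ m m' : ℤ → ℝ,
      (∀ α ∈ Finset.Icc (-L) L, IsSpinVal J (m α)) →
      (∑ α ∈ Finset.Icc (-L) L, m α) = M →
      (∑ α ∈ Finset.Icc (-L) (L - 1), (J + m α) * (J - m (α + 1))) = 0 →
      (∀ α ∈ Finset.Icc (-L) L, IsSpinVal J (m' α)) →
      (∑ α ∈ Finset.Icc (-L) L, m' α) = M →
      (∑ α ∈ Finset.Icc (-L) (L - 1), (J + m' α) * (J - m' (α + 1))) = 0 →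
      ∀ α ∈ Finset.Icc (-L) L, m α = m' α) := by
  obtain ⟨nn, hnn, hJn⟩ := hJ
  set n : ℤ := (nn : ℤ) with hn_def
  have hn1 : 1 ≤ n := by rw [hn_def]; exact_mod_cast hnn
  have hn2 : (n : ℝ) = 2 * J := by
    rw [hn_def, hJn]; push_cast; ring
  have hJ0 : 0 < J := by
    rw [hJn]; positivity
  obtain ⟨c, hc, hcsum⟩ := hM
  -- cardinality of the site interval
  have hcard : (Finset.Icc (-L) L).card = (2 * L + 1).toNat := by
    rw [Int.card_Icc]; congr 1; ring
  have hcardR : ((Finset.Icc (-L) L).card : ℝ) = 2 * (L : ℝ) + 1 := by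
    have h : ((2 * L + 1).toNat : ℤ) = 2 * L + 1 := Int.toNat_of_nonneg (by omega)
    rw [hcard]
    exact_mod_cast h
  -- total raised weight K
  have hKex : ∃ K : ℤ, (K : ℝ) = ∑ α ∈ Finset.Icc (-L) L, (c α + J) := by
    classical
    refine Finset.sum_induction _ (fun x => ∃ K : ℤ, (K : ℝ) = x) ?_ ⟨0, by simp⟩ ?_
    · rintro a b ⟨k, hk⟩ ⟨l, hl⟩; exact ⟨k + l, by push_cast; rw [hk, hl]⟩
    · intro α hα
      obtain ⟨k, hk⟩ := (hc α hα).2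
      exact ⟨k, by rw [hk]; ring⟩
  obtain ⟨K, hK⟩ := hKex
  have hK0 : 0 ≤ K := by
    have : (0 : ℝ) ≤ K := by
      rw [hK]
      apply Finset.sum_nonneg
      intro α hα
      have := (abs_le.mp (hc α hα).1).1
      linarith
    exact_mod_cast this
  have hKtop : K ≤ n * (2 * L + 1) := by
    have h1 : (K : ℝ) ≤ (2 * (L : ℝ) + 1) * (2 * J) := by
      rw [hK]
      calc ∑ α ∈ Finset.Icc (-L) L, (c α + J)
          ≤ ∑ α ∈ Finset.Icc (-L) L, (2 * J) := by
            apply Finset.sum_le_sum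
            intro α hα
            have := (abs_le.mp (hc α hα).1).2
            linarith
        _ = (2 * (L : ℝ) + 1) * (2 * J) := by
            rw [Finset.sum_const, nsmul_eq_mul, hcardR]
    have hcast : ((n * (2 * L + 1) : ℤ) : ℝ) = (n : ℝ) * (2 * (L : ℝ) + 1) := by
      push_cast; ring
    have : (K : ℝ) ≤ ((n * (2 * L + 1) : ℤ) : ℝ) := by
      rw [hcast, hn2]; linarith
    exact_mod_cast this
  -- relate M and K
  have hMK : M = (K : ℝ) - (2 * (L : ℝ) + 1) * J := by
    have : (K : ℝ) = M + (2 * (L : ℝ) + 1) * J := by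
      rw [hK, Finset.sum_add_distrib, hcsum, Finset.sum_const, nsmul_eq_mul, hcardR]
    linarith
  -- the explicit ground state
  set A : ℤ → ℤ := fun α => min K (n * (L - α + 1)) with hA_def
  set φ : ℤ → ℤ := fun α => A α - A (α + 1) with hφ_def
  set m₀ : ℤ → ℝ := fun α => -J + (φ α : ℝ) with hm₀_def
  have hφ_bounds : ∀ α : ℤ, 0 ≤ φ α ∧ φ α ≤ n := by
    intro α
    have hx : n * (L - (α + 1) + 1) = n * (L - α + 1) - n := by ring
    simp only [hφ_def, hA_def, hx]
    constructor <;> omega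
  have hφ_bond : ∀ α : ℤ, φ α = 0 ∨ φ (α + 1) = n := by
    intro α
    have hx1 : n * (L - (α + 1) + 1) = n * (L - α + 1) - n := by ring
    have hx2 : n * (L - (α + 1 + 1) + 1) = n * (L - α + 1) - 2 * n := by ring
    simp only [hφ_def, hA_def, hx1, hx2]
    omega
  have hspin : ∀ α ∈ Finset.Icc (-L) L, IsSpinVal J (m₀ α) := by
    intro α _
    obtain ⟨h0, h1⟩ := hφ_bounds α
    constructor
    · rw [abs_le]
      constructor
      · simp only [hm₀_def]
        have : (0 : ℝ) ≤ (φ α : ℝ) := by exact_mod_cast h0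
        linarith
      · simp only [hm₀_def]
        have : (φ α : ℝ) ≤ (n : ℝ) := by exact_mod_cast h1
        rw [hn2] at this
        linarith
    · exact ⟨φ α, rfl⟩
  have hφ_sum : ∑ α ∈ Finset.Icc (-L) L, φ α = K := by
    simp only [hφ_def]
    rw [tele_sum A (-L) L (by omega)]
    have h1 : A (-L) = K := by
      simp only [hA_def]
      have : n * (L - (-L) + 1) = n * (2 * L + 1) := by ring
      rw [this]
      omega
    have h2 : A (L + 1) = 0 := by
      simp only [hA_def]
      have : n * (L - (L + 1) + 1) = 0 := by ring
      rw [this]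
      omega
    rw [h1, h2]; ring
  have hm₀sum : (∑ α ∈ Finset.Icc (-L) L, m₀ α) = M := by
    simp only [hm₀_def]
    rw [Finset.sum_add_distrib, Finset.sum_const, nsmul_eq_mul, hcardR]
    have : ∑ α ∈ Finset.Icc (-L) L, (φ α : ℝ) = (K : ℝ) := by
      rw [← Int.cast_sum, hφ_sum]
    rw [this, hMK]
    ring
  have hm₀E : (∑ α ∈ Finset.Icc (-L) (L - 1), (J + m₀ α) * (J - m₀ (α + 1))) = 0 := by
    apply Finset.sum_eq_zero
    intro α _
    rcases hφ_bond α with h | h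
    · have : J + m₀ α = 0 := by
        simp only [hm₀_def, h]
        push_cast
        ring
      rw [this, zero_mul]
    · have : J - m₀ (α + 1) = 0 := by
        simp only [hm₀_def, h]
        rw [hn2]
        ring
      rw [this, mul_zero]
  refine ⟨⟨m₀, hspin, hm₀sum, hm₀E⟩, ?_⟩
  -- uniqueness
  intro m m' hs hsum hE hs' hsum' hE' α hα
  by_contra hne
  rcases lt_or_gt_of_ne hne with h | h
  · have := sum_lt hJ0 hL hs hE hs' hE' hα h
    rw [hsum, hsum'] at this
    exact lt_irrefl M this
  · have := sum_lt hJ0 hL hs' hE' hs hE hα h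
    rw [hsum, hsum'] at this
    exact lt_irrefl M this
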